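/- Let n ≥ 2 and let G = G_1 × ⋯ × G_n be a direct product of finite groups such that every maximal subgroup M of G splits as a direct product M = M_1 × ⋯ × M_n with M_i ≤ G_i for every i. If each G_i satisfies the (μ,λ)-property, then G satisfies the (μ,λ)-property. -/

import Mathlib

open Classical in
/-- The Möbius function of a finite partial order with a top element:
`mob ⊤ = 1` and `mob x = -∑_{x < y ≤ ⊤} mob y` for `x ≠ ⊤`. -/
noncomputable def mob {α : Type*} [PartialOrder α] [OrderTop α] [Finite α] (x : α) : ℤ :=
  if x = ⊤ then 1
  else - ∑ y ∈ (Set.toFinite {y : α | x < y}).toFinset.attach, mob y.1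
termination_by (Set.toFinite {y : α | x < y}).toFinset.card
decreasing_by
  have hy : x < y.1 := by
    have h2 := y.2
    rwa [Set.Finite.mem_toFinset] at h2
  refine Finset.card_lt_card ?_
  rw [Finset.ssubset_iff_of_subset]
  · exact ⟨y.1, by rwa [Set.Finite.mem_toFinset], by simp [Set.Finite.mem_toFinset]⟩
  · intro z hz
    rw [Set.Finite.mem_toFinset] at hz ⊢
    exact hy.trans hz

set_option linter.unusedSectionVars false
set_option linter.unusedVariables false

section MobLemmas

variable {α : Type*} [PartialOrder α] [OrderTop α] [Finite α]

noncomputable def uSet (x : α) : Finset α := (Set.toFinite {y : α | x < y}).toFinset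

lemma mem_uSet {x y : α} : y ∈ uSet x ↔ x < y := Set.Finite.mem_toFinset _

lemma uSet_card_lt {x y : α} (h : x < y) : (uSet y).card < (uSet x).card := by
  refine Finset.card_lt_card ?_
  rw [Finset.ssubset_iff_of_subset]
  · exact ⟨y, mem_uSet.2 h, by simp [mem_uSet]⟩
  · intro z hz
    rw [mem_uSet] at hz ⊢
    exact h.trans hz

lemma mob_top : mob (⊤ : α) = 1 := by rw [mob]; simp

lemma mob_of_ne_top {x : α} (h : x ≠ ⊤) : mob x = - ∑ y ∈ uSet x, mob y := by
  rw [mob, if_neg h]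
  congr 1
  exact Finset.sum_attach _ _

open Finset in
/-- Rota's closure-vanishing theorem: `mob` vanishes off the closed elements of a
closure operator (whose only preimage of `⊤` is `⊤`). -/
lemma mob_eq_zero_of_closure (c : α → α) (hmono : Monotone c) (hext : ∀ x, x ≤ c x)
    (hidem : ∀ x, c (c x) = c x) (htop : ∀ x, c x = ⊤ → x = ⊤) :
    ∀ x : α, c x ≠ x → mob x = 0 := by
  classical
  have key : ∀ n (x : α), (uSet x).card = n → c x ≠ x → mob x = 0 := by
    intro n
    induction n using Nat.strong_induction_on with
    | _ n IH =>
      intro x hn hcx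
      have hxt : x ≠ ⊤ := by
        rintro rfl
        exact hcx (le_antisymm le_top (hext _))
      have hct : c x ≠ ⊤ := fun h => hxt (htop _ h)
      have hxcx : x < c x := lt_of_le_of_ne (hext x) (Ne.symm hcx)
      -- vanishing of non-closed strictly above x
      have hvan : ∀ y, x < y → c y ≠ y → mob y = 0 := by
        intro y hy hcy
        exact IH (uSet y).card (hn ▸ uSet_card_lt hy) y rfl hcy
      have hsplit : ∑ y ∈ uSet x, mob y
          = ∑ y ∈ (uSet x).filter (fun y => c y = y), mob y := by
        refine (Finset.sum_filter_of_ne ?_).symm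
        intro y hy hmy
        by_contra hcy
        exact hmy (hvan y (mem_uSet.1 hy) hcy)
      have hset : (uSet x).filter (fun y => c y = y)
          = insert (c x) ((uSet (c x)).filter (fun y => c y = y)) := by
        ext y
        simp only [Finset.mem_insert, Finset.mem_filter, mem_uSet]
        constructor
        · rintro ⟨hxy, hcy⟩
          rcases eq_or_lt_of_le (hcy ▸ hmono hxy.le) with h | h
          · exact Or.inl h.symm
          · exact Or.inr ⟨h, hcy⟩
        · rintro (rfl | ⟨h1, h2⟩)
          · exact ⟨hxcx, hidem x⟩
          · exact ⟨hxcx.trans h1, h2⟩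
      have hnotmem : c x ∉ (uSet (c x)).filter (fun y => c y = y) := by
        simp [mem_uSet]
      have hcx_eq : mob (c x) = - ∑ y ∈ (uSet (c x)).filter (fun y => c y = y), mob y := by
        rw [mob_of_ne_top hct]
        congr 1
        refine (Finset.sum_filter_of_ne ?_).symm
        intro y hy hmy
        by_contra hcy
        exact hmy (hvan y (hxcx.trans (mem_uSet.1 hy)) hcy)
      rw [mob_of_ne_top hxt, hsplit, hset, Finset.sum_insert hnotmem, hcx_eq]
      ring
  exact fun x => key (uSet x).card x rfl

end MobLemmas
/-- The (weak) up-set of `x` as a `Finset`. -/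
noncomputable def tSet {α : Type*} [PartialOrder α] [Finite α] (x : α) :
    Finset α := (Set.toFinite {y : α | x ≤ y}).toFinset

lemma mem_tSet {α : Type*} [PartialOrder α] [Finite α] {x y : α} :
    y ∈ tSet x ↔ x ≤ y := Set.Finite.mem_toFinset _

lemma sum_tSet_mob {α : Type*} [PartialOrder α] [OrderTop α] [Finite α] {x : α} (h : x ≠ ⊤)
    {M : Type*} [AddCommGroup M] (f : α → M) (hf : f x = - ∑ y ∈ uSet x, f y) :
    ∑ y ∈ tSet x, f y = 0 := by
  classical
  have : tSet x = insert x (uSet x) := by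
    ext y
    simp only [mem_tSet, Finset.mem_insert, mem_uSet]
    rw [eq_comm, ← le_iff_eq_or_lt]
  rw [this, Finset.sum_insert (by simp [mem_uSet]), hf]
  abel

open Finset in
/-- Multiplicativity of `mob` along an order-embedding of a finite product of posets
onto a superset of the support of `mob`. -/
lemma mob_pi_map {ι : Type*} [Fintype ι] {Q : ι → Type*} [∀ i, PartialOrder (Q i)]
    [∀ i, OrderTop (Q i)] [∀ i, Finite (Q i)]
    {P : Type*} [PartialOrder P] [OrderTop P] [Finite P]
    (e : (∀ i, Q i) → P) (hord : ∀ q q', e q ≤ e q' ↔ q ≤ q')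
    (hetop : e ⊤ = ⊤)
    (hvan : ∀ p : P, (∀ q, e q ≠ p) → mob p = 0) :
    ∀ q, mob (e q) = ∏ i, mob (q i) := by
  classical
  have hinj : Function.Injective e := fun a b hab =>
    le_antisymm ((hord _ _).1 hab.le) ((hord _ _).1 hab.ge)
  have hlt : ∀ q q' : ∀ i, Q i, e q < e q' ↔ q < q' := by
    intro a b
    rw [lt_iff_le_not_ge, lt_iff_le_not_ge, hord, hord]
  have key : ∀ n (q : ∀ i, Q i), (uSet (e q)).card = n → mob (e q) = ∏ i, mob (q i) := by
    intro n
    induction n using Nat.strong_induction_on with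
    | _ n IH =>
      intro q hn
      by_cases hq : q = ⊤
      · subst hq
        rw [hetop, mob_top]
        symm
        apply Finset.prod_eq_one
        intro i _
        exact mob_top
      · have het : e q ≠ ⊤ := fun h => hq (hinj (h.trans hetop.symm))
        have h1 : ∑ p ∈ uSet (e q), mob p
            = ∑ p ∈ (uSet (e q)).filter (· ∈ Set.range e), mob p := by
          refine (Finset.sum_filter_of_ne ?_).symm
          intro p hp hmp
          by_contra hr
          exact hmp (hvan p (fun q' hq' => hr ⟨q', hq'⟩))
        have h2 : (uSet (e q)).filter (· ∈ Set.range e) = (uSet q).image e := by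
          ext p
          simp only [Finset.mem_filter, Finset.mem_image, mem_uSet, Set.mem_range]
          constructor
          · rintro ⟨hp, q', rfl⟩
            exact ⟨q', (hlt _ _).1 hp, rfl⟩
          · rintro ⟨q', hq', rfl⟩
            exact ⟨(hlt _ _).2 hq', ⟨q', rfl⟩⟩
        have h3 : ∀ q' ∈ uSet q, mob (e q') = ∏ i, mob (q' i) := fun q' hq' =>
          IH _ (hn ▸ uSet_card_lt ((hlt q q').2 (mem_uSet.1 hq'))) q' rfl
        -- the distribution identity
        have h4 : ∑ q' ∈ tSet q, ∏ i, mob (q' i) = 0 := by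
          have hpi : tSet q = Fintype.piFinset (fun i => tSet (q i)) := by
            ext x
            simp [mem_tSet, Fintype.mem_piFinset, Pi.le_def]
          rw [hpi, ← Finset.prod_univ_sum]
          obtain ⟨i, hi⟩ : ∃ i, q i ≠ ⊤ := by
            by_contra hc
            push_neg at hc
            exact hq (funext hc)
          exact Finset.prod_eq_zero (mem_univ i)
            (sum_tSet_mob hi mob (mob_of_ne_top hi))
        have h5 : ∑ q' ∈ uSet q, ∏ i, mob (q' i) = - ∏ i, mob (q i) := by
          have heq : tSet q = insert q (uSet q) := by
            ext y
            simp only [mem_tSet, Finset.mem_insert, mem_uSet]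
            rw [eq_comm, ← le_iff_eq_or_lt]
          rw [heq, Finset.sum_insert (by simp [mem_uSet])] at h4
          linarith
        rw [mob_of_ne_top het, h1, h2, Finset.sum_image (fun a _ b _ h => hinj h),
          Finset.sum_congr rfl h3, h5]
        ring
  exact fun q => key _ q rfl

section C

variable (G : Type*) [Group G]

instance subgroupFinite [Finite G] : Finite (Subgroup G) :=
  Finite.of_injective (fun H => (H : Set G)) SetLike.coe_injective

/-- Type synonym for `Subgroup G`, endowed with the preorder `H ≼ K` iff
`H ≤ gKg⁻¹` for some `g : G`. -/
def CSub := Subgroup G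

variable {G}

/-- Conversion from `Subgroup G` to the type synonym `CSub G`. -/
def CSub.mk (H : Subgroup G) : CSub G := H

/-- Conversion from the type synonym `CSub G` to `Subgroup G`. -/
def CSub.toSubgroup (H : CSub G) : Subgroup G := H

variable (G)

instance : Preorder (CSub G) where
  le H K := ∃ g : G, H.toSubgroup ≤ K.toSubgroup.map (MulAut.conj g).toMonoidHom
  le_refl H := ⟨1, by
    simp only [map_one]
    rw [show MulEquiv.toMonoidHom (1 : MulAut G) = MonoidHom.id G from rfl, Subgroup.map_id]⟩
  le_trans H K L := by
    rintro ⟨g, hg⟩ ⟨h, hh⟩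
    refine ⟨g * h, hg.trans ?_⟩
    have hm := Subgroup.map_mono (f := (MulAut.conj g).toMonoidHom) hh
    rw [Subgroup.map_map] at hm
    refine hm.trans (le_of_eq ?_)
    congr 1
    ext x
    simp [mul_assoc]

instance [Finite G] : Finite (CSub G) := subgroupFinite G

/-- The poset of conjugacy classes of subgroups of `G`: for a finite group this is
the quotient of subgroups by conjugacy, with `[H] ≤ [K]` iff `H ≤ gKg⁻¹` for some `g ∈ G`. -/
abbrev ConjClassSub := Antisymmetrization (CSub G) (· ≤ ·)

/-- The conjugacy class of a subgroup, as an element of `ConjClassSub G`. -/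
def conjClassOf (H : Subgroup G) : ConjClassSub G :=
  toAntisymmetrization (α := CSub G) (· ≤ ·) (CSub.mk H)

instance : OrderTop (ConjClassSub G) where
  top := conjClassOf G ⊤
  le_top c := by
    induction c using Quotient.ind with
    | _ H =>
      show toAntisymmetrization (α := CSub G) (· ≤ ·) H ≤
        toAntisymmetrization (α := CSub G) (· ≤ ·) (CSub.mk ⊤)
      rw [toAntisymmetrization_le_toAntisymmetrization_iff]
      refine ⟨1, ?_⟩
      show H.toSubgroup ≤ Subgroup.map (MulAut.conj (1:G)).toMonoidHom (⊤ : Subgroup G)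
      rw [Subgroup.map_top_of_surjective _ (MulAut.conj (1:G)).surjective]
      exact le_top

instance [Finite G] : Finite (ConjClassSub G) := Quotient.finite _

variable {G}

/-- The Möbius function `μ_G` on the subgroup lattice of the finite group `G`. -/
noncomputable def muSub [Finite G] (H : Subgroup G) : ℤ := mob H

/-- The Möbius function `λ_G` on the poset of conjugacy classes of subgroups of the
finite group `G`, evaluated at the class of `H`. -/
noncomputable def lamSub [Finite G] (H : Subgroup G) : ℤ :=
  mob (conjClassOf G H)

/-- `G` satisfies the (μ,λ)-property if `μ_G(H) = [N_{G'}(H) : G' ∩ H] · λ_G(H)`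
for every subgroup `H ≤ G`, where `G' = [G,G]` and `N_{G'}(H) = N_G(H) ∩ G'`. -/
def MuLambdaProperty (G : Type*) [Group G] [Finite G] : Prop :=
  ∀ H : Subgroup G,
    muSub H =
      ((commutator G ⊓ H).relIndex (Subgroup.normalizer (H : Set G) ⊓ commutator G) : ℤ) * lamSub H

/-- `MaxInt G` consists of `G` itself (the subgroup `⊤`) together with all
intersections of nonempty families of maximal subgroups of `G`. -/
def MaxInt (G : Type*) [Group G] : Set (Subgroup G) :=
  {H | H = ⊤ ∨ ∃ S : Set (Subgroup G), S.Nonempty ∧ (∀ M ∈ S, IsCoatom M) ∧ H = sInf S}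

end C

section ConjLemmas

variable {G : Type*} [Group G]

/-- Conjugation of a subgroup by an element. -/
def cj (g : G) (H : Subgroup G) : Subgroup G := Subgroup.map (MulAut.conj g).toMonoidHom H

/-- Conjugation as an order isomorphism of the subgroup lattice. -/
def cjIso (g : G) : Subgroup G ≃o Subgroup G := (MulAut.conj g).mapSubgroup

lemma cjIso_apply (g : G) (H : Subgroup G) : cjIso g H = cj g H := rfl

lemma mem_cj {g x : G} {H : Subgroup G} : x ∈ cj g H ↔ g⁻¹ * x * g ∈ H := by
  simp only [cj, Subgroup.mem_map, MulEquiv.coe_toMonoidHom, MulAut.conj_apply]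
  constructor
  · rintro ⟨y, hy, rfl⟩
    group
    simpa using hy
  · intro h
    exact ⟨g⁻¹ * x * g, h, by group⟩

lemma cj_cj (g h : G) (H : Subgroup G) : cj g (cj h H) = cj (g * h) H := by
  ext x
  simp only [mem_cj]
  have hgr : (g * h)⁻¹ * x * (g * h) = h⁻¹ * (g⁻¹ * x * g) * h := by group
  rw [hgr]

lemma cj_one (H : Subgroup G) : cj 1 H = H := by
  ext x; simp [mem_cj]

lemma cj_le_cj {g : G} {H K : Subgroup G} : cj g H ≤ cj g K ↔ H ≤ K :=
  (cjIso g).le_iff_le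

lemma cj_mono {g : G} {H K : Subgroup G} (h : H ≤ K) : cj g H ≤ cj g K :=
  cj_le_cj.2 h

lemma cj_top (g : G) : cj g (⊤ : Subgroup G) = ⊤ :=
  Subgroup.map_top_of_surjective _ (MulAut.conj g).surjective

lemma cj_eq_top_iff {g : G} {H : Subgroup G} : cj g H = ⊤ ↔ H = ⊤ := by
  constructor
  · intro h
    have := (cjIso g).injective (a₁ := H) (a₂ := ⊤)
    exact this (by rw [cjIso_apply, cjIso_apply, h, cj_top])
  · rintro rfl; exact cj_top g

lemma card_cj (g : G) (H : Subgroup G) : Nat.card (cj g H) = Nat.card H :=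
  (Nat.card_congr (H.equivMapOfInjective _ (MulAut.conj g).injective).toEquiv).symm

lemma subgroup_eq_of_le_of_card_le [Finite G] {H K : Subgroup G} (h : H ≤ K)
    (hc : Nat.card K ≤ Nat.card H) : H = K := by
  apply SetLike.ext'
  refine Set.eq_of_subset_of_ncard_le h ?_ (Set.toFinite _)
  rwa [← Nat.card_coe_set_eq, ← Nat.card_coe_set_eq]

lemma eq_cj_of_le_of_le [Finite G] {H K : Subgroup G} {g h : G}
    (h1 : H ≤ cj g K) (h2 : K ≤ cj h H) : H = cj g K := by
  refine subgroup_eq_of_le_of_card_le h1 ?_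
  rw [card_cj]
  calc Nat.card K ≤ Nat.card (cj h H) := Subgroup.card_le_of_le h2
  _ = Nat.card H := card_cj _ _

end ConjLemmas

section ClassLemmas

variable {G : Type*} [Group G]

/-- A representative subgroup of a conjugacy class of subgroups. -/
noncomputable def rep (x : ConjClassSub G) : Subgroup G :=
  (ofAntisymmetrization (α := CSub G) (· ≤ ·) x).toSubgroup

lemma conjClassOf_rep (x : ConjClassSub G) : conjClassOf G (rep x) = x :=
  toAntisymmetrization_ofAntisymmetrization _ _

lemma conjClassOf_le_iff {H K : Subgroup G} :
    conjClassOf G H ≤ conjClassOf G K ↔ ∃ g, H ≤ cj g K :=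
  toAntisymmetrization_le_toAntisymmetrization_iff

lemma conjClassOf_cj (g : G) (H : Subgroup G) :
    conjClassOf G (cj g H) = conjClassOf G H := by
  apply le_antisymm
  · exact conjClassOf_le_iff.2 ⟨g, le_rfl⟩
  · refine conjClassOf_le_iff.2 ⟨g⁻¹, ?_⟩
    rw [cj_cj, inv_mul_cancel, cj_one]

lemma exists_conj_of_class_eq [Finite G] {H K : Subgroup G}
    (h : conjClassOf G H = conjClassOf G K) : ∃ g, K = cj g H := by
  obtain ⟨g, hg⟩ := conjClassOf_le_iff.1 h.le
  obtain ⟨g', hg'⟩ := conjClassOf_le_iff.1 h.ge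
  exact ⟨g', eq_cj_of_le_of_le hg' hg⟩

lemma top_classSub : (⊤ : ConjClassSub G) = conjClassOf G ⊤ := rfl

lemma class_eq_top_iff [Finite G] {H : Subgroup G} :
    conjClassOf G H = ⊤ ↔ H = ⊤ := by
  constructor
  · intro h
    obtain ⟨g, hg⟩ := exists_conj_of_class_eq (h.trans top_classSub)
    rw [← cj_eq_top_iff (g := g), ← hg]
  · rintro rfl; rfl

lemma rep_spec (H : Subgroup G) [Finite G] : ∃ g, rep (conjClassOf G H) = cj g H := by
  have := conjClassOf_rep (conjClassOf G H)
  exact exists_conj_of_class_eq this.symm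

lemma rep_top [Finite G] : rep (⊤ : ConjClassSub G) = ⊤ := by
  have := conjClassOf_rep (⊤ : ConjClassSub G)
  exact class_eq_top_iff.1 this

end ClassLemmas

section Mcl

variable {G : Type*} [Group G]

/-- The intersection of all maximal subgroups containing `H` (a closure operator). -/
def mcl (H : Subgroup G) : Subgroup G := sInf {M | IsCoatom M ∧ H ≤ M}

lemma le_mcl (H : Subgroup G) : H ≤ mcl H := le_sInf fun _ hM => hM.2

lemma mcl_mono {H K : Subgroup G} (h : H ≤ K) : mcl H ≤ mcl K :=
  sInf_le_sInf fun M hM => ⟨hM.1, h.trans hM.2⟩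

lemma mcl_idem (H : Subgroup G) : mcl (mcl H) = mcl H := by
  refine le_antisymm (sInf_le_sInf fun M hM => ⟨hM.1, sInf_le hM⟩) (le_mcl _)

lemma mcl_eq_top [Finite G] {H : Subgroup G} (h : mcl H = ⊤) : H = ⊤ := by
  by_contra hH
  obtain ⟨M, hM, hHM⟩ := (eq_top_or_exists_le_coatom H).resolve_left hH
  exact hM.1 (top_le_iff.1 (h ▸ sInf_le ⟨hM, hHM⟩))

lemma cj_sInf (g : G) (S : Set (Subgroup G)) : cj g (sInf S) = sInf (cj g '' S) := by
  rw [show (sInf (cj g '' S)) = _ from sInf_image]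
  exact (cjIso g).map_sInf S

lemma isCoatom_cj_iff {g : G} {M : Subgroup G} : IsCoatom (cj g M) ↔ IsCoatom M :=
  OrderIso.isCoatom_iff (cjIso g) M

lemma mcl_cj (g : G) (H : Subgroup G) : mcl (cj g H) = cj g (mcl H) := by
  rw [mcl, mcl, cj_sInf]
  congr 1
  ext M
  simp only [Set.mem_setOf_eq, Set.mem_image]
  constructor
  · rintro ⟨hM, hHM⟩
    refine ⟨cj g⁻¹ M, ⟨?_, ?_⟩, by rw [cj_cj, mul_inv_cancel, cj_one]⟩
    · rw [← isCoatom_cj_iff (g := g), cj_cj, mul_inv_cancel, cj_one]; exact hM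
    · have := cj_mono (g := g⁻¹) hHM
      rwa [cj_cj, inv_mul_cancel, cj_one] at this
  · rintro ⟨M', ⟨hM', hHM'⟩, rfl⟩
    exact ⟨isCoatom_cj_iff.2 hM', cj_mono hHM'⟩

end Mcl

section MclC

variable {G : Type*} [Group G] [Finite G]

/-- The closure operator `[H] ↦ [mcl H]` on conjugacy classes of subgroups. -/
noncomputable def mclC (x : ConjClassSub G) : ConjClassSub G := conjClassOf G (mcl (rep x))

lemma le_mclC (x : ConjClassSub G) : x ≤ mclC x := by
  conv_lhs => rw [← conjClassOf_rep x]
  exact conjClassOf_le_iff.2 ⟨1, by rw [cj_one]; exact le_mcl _⟩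

lemma mclC_mono : Monotone (mclC (G := G)) := by
  intro x y hxy
  rw [← conjClassOf_rep x, ← conjClassOf_rep y] at hxy
  obtain ⟨g, hg⟩ := conjClassOf_le_iff.1 hxy
  refine conjClassOf_le_iff.2 ⟨g, ?_⟩
  have := mcl_mono hg
  rwa [mcl_cj] at this

lemma mclC_idem (x : ConjClassSub G) : mclC (mclC x) = mclC x := by
  unfold mclC
  obtain ⟨g, hg⟩ := rep_spec (mcl (rep x))
  rw [hg, mcl_cj, mcl_idem, conjClassOf_cj]

lemma mclC_eq_top {x : ConjClassSub G} (h : mclC x = ⊤) : x = ⊤ := by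
  rw [← conjClassOf_rep x, class_eq_top_iff]
  exact mcl_eq_top (class_eq_top_iff.1 h)

end MclC

section PiLemmas

variable {ι : Type*} [Fintype ι] [DecidableEq ι] {G : ι → Type*} [∀ i, Group (G i)]

open Subgroup

/-- Projection of a subgroup of a product to the `i`-th factor. -/
def prj (i : ι) (H : Subgroup (∀ i, G i)) : Subgroup (G i) :=
  Subgroup.map (Pi.evalMonoidHom G i) H

lemma prj_mono {i : ι} {H K : Subgroup (∀ i, G i)} (h : H ≤ K) : prj i H ≤ prj i K :=
  Subgroup.map_mono h

lemma pi_le_pi_iff {K K' : ∀ i, Subgroup (G i)} :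
    pi Set.univ K ≤ pi Set.univ K' ↔ ∀ i, K i ≤ K' i := by
  constructor
  · intro h i x hx
    have hm : Pi.mulSingle i x ∈ pi Set.univ K :=
      (mulSingle_mem_pi i x).2 fun _ => hx
    have := h hm
    have h2 := (mem_pi _).1 this i (Set.mem_univ i)
    simpa using h2
  · intro h x hx
    rw [mem_pi] at hx ⊢
    exact fun i hi => h i (hx i hi)

lemma pi_mono {K K' : ∀ i, Subgroup (G i)} (h : ∀ i, K i ≤ K' i) :
    pi Set.univ K ≤ pi Set.univ K' := pi_le_pi_iff.2 h

lemma prj_pi (i : ι) (K : ∀ i, Subgroup (G i)) : prj i (pi Set.univ K) = K i := by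
  apply le_antisymm
  · rintro x ⟨y, hy, rfl⟩
    exact (mem_pi _).1 hy i (Set.mem_univ i)
  · intro x hx
    exact ⟨Pi.mulSingle i x, (mulSingle_mem_pi i x).2 fun _ => hx, by simp⟩

lemma le_pi_prj (H : Subgroup (∀ i, G i)) : H ≤ pi Set.univ (fun i => prj i H) := by
  intro x hx
  rw [mem_pi]
  exact fun i _ => ⟨x, hx, rfl⟩

/-- A subgroup of a product splits if it is a product of subgroups of the factors. -/
def IsSplit (H : Subgroup (∀ i, G i)) : Prop := ∃ K, H = pi Set.univ K

lemma isSplit_iff {H : Subgroup (∀ i, G i)} :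
    IsSplit H ↔ H = pi Set.univ (fun i => prj i H) := by
  constructor
  · rintro ⟨K, rfl⟩
    congr 1
    funext i
    rw [prj_pi]
  · intro h
    exact ⟨_, h⟩

lemma cj_pi (g : ∀ i, G i) (K : ∀ i, Subgroup (G i)) :
    cj g (pi Set.univ K) = pi Set.univ (fun i => cj (g i) (K i)) := by
  ext x
  rw [mem_cj, mem_pi, mem_pi]
  constructor
  · intro h i _
    rw [mem_cj]
    exact h i (Set.mem_univ i)
  · intro h i _
    have := h i (Set.mem_univ i)
    rwa [mem_cj] at this

lemma isSplit_cj {g : ∀ i, G i} {H : Subgroup (∀ i, G i)} (h : IsSplit H) :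
    IsSplit (cj g H) := by
  obtain ⟨K, rfl⟩ := h
  exact ⟨_, cj_pi g K⟩

lemma isSplit_sInf {S : Set (Subgroup (∀ i, G i))} (h : ∀ M ∈ S, IsSplit M) :
    IsSplit (sInf S) := by
  rw [isSplit_iff]
  refine le_antisymm (le_pi_prj _) (le_sInf ?_)
  intro M hM
  obtain ⟨K, rfl⟩ := h M hM
  refine le_trans (pi_mono (fun i => ?_)) (le_of_eq rfl)
  have : prj i (sInf S) ≤ prj i (pi Set.univ K) := prj_mono (sInf_le hM)
  rwa [prj_pi] at this

lemma pi_inf (A B : ∀ i, Subgroup (G i)) :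
    pi Set.univ A ⊓ pi Set.univ B = pi Set.univ (fun i => A i ⊓ B i) := by
  ext x
  simp only [Subgroup.mem_inf, mem_pi, Set.mem_univ, forall_true_left]
  aesop

lemma normalizer_pi (K : ∀ i, Subgroup (G i)) :
    Subgroup.normalizer ((pi Set.univ K : Subgroup (∀ i, G i)) : Set (∀ i, G i)) = pi Set.univ (fun i => Subgroup.normalizer ((K i : Subgroup (G i)) : Set (G i))) := by
  ext n
  rw [Subgroup.mem_normalizer_iff, mem_pi]
  constructor
  · intro h i _
    rw [Subgroup.mem_normalizer_iff]
    intro x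
    have key : ∀ y : G i, n * Pi.mulSingle i y * n⁻¹ = Pi.mulSingle i (n i * y * (n i)⁻¹) := by
      intro y
      funext j
      by_cases hj : j = i
      · subst hj; simp
      · simp [Pi.mulSingle, Function.update_of_ne hj]
    constructor
    · intro hx
      have h1 : Pi.mulSingle i x ∈ pi Set.univ K := (mulSingle_mem_pi i x).2 fun _ => hx
      have h2 := (h _).1 h1
      rw [key] at h2
      have h3 := (mem_pi _).1 h2 i (Set.mem_univ i)
      simpa using h3
    · intro hx
      have h1 : Pi.mulSingle i (n i * x * (n i)⁻¹) ∈ pi Set.univ K :=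
        (mulSingle_mem_pi i _).2 fun _ => hx
      rw [← key] at h1
      have h2 := (h _).2 h1
      have h3 := (mem_pi _).1 h2 i (Set.mem_univ i)
      simpa using h3
  · intro h x
    rw [mem_pi, mem_pi]
    constructor
    · intro hx i _
      have := (Subgroup.mem_normalizer_iff.1 (h i (Set.mem_univ i)) (x i)).1 (hx i (Set.mem_univ i))
      simpa using this
    · intro hx i _
      have := (Subgroup.mem_normalizer_iff.1 (h i (Set.mem_univ i)) (x i)).2 (by simpa using hx i (Set.mem_univ i))
      exact this

/-- The obvious equivalence between a product subgroup and the product of the subgroups. -/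
def piSubgroupEquiv (K : ∀ i, Subgroup (G i)) : (pi Set.univ K) ≃ ∀ i, K i where
  toFun x i := ⟨x.1 i, (mem_pi _).1 x.2 i (Set.mem_univ i)⟩
  invFun f := ⟨fun i => (f i).1, (mem_pi _).2 fun i _ => (f i).2⟩
  left_inv x := rfl
  right_inv f := rfl

lemma card_pi (K : ∀ i, Subgroup (G i)) :
    Nat.card (pi Set.univ K) = ∏ i, Nat.card (K i) := by
  rw [Nat.card_congr (piSubgroupEquiv K), Nat.card_pi]

end PiLemmas

section Relindex

variable {G : Type*} [Group G] [Finite G]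

lemma relindex_mul_card_inf (A B : Subgroup G) :
    A.relIndex B * Nat.card (A ⊓ B : Subgroup G) = Nat.card B := by
  rw [← Subgroup.inf_relIndex_right]
  have h1 := Subgroup.index_mul_card ((A ⊓ B).subgroupOf B)
  have h2 : Nat.card ((A ⊓ B).subgroupOf B) = Nat.card (A ⊓ B : Subgroup G) :=
    Nat.card_congr (Subgroup.subgroupOfEquivOfLe inf_le_right).toEquiv
  rw [Subgroup.relIndex]
  rw [h2] at h1
  exact h1

end Relindex

section RelindexPi

variable {ι : Type*} [Fintype ι] [DecidableEq ι] {G : ι → Type*} [∀ i, Group (G i)]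
  [∀ i, Finite (G i)]

lemma relindex_pi (A B : ∀ i, Subgroup (G i)) :
    (Subgroup.pi Set.univ A).relIndex (Subgroup.pi Set.univ B)
      = ∏ i, (A i).relIndex (B i) := by
  have h1 := relindex_mul_card_inf (Subgroup.pi Set.univ A) (Subgroup.pi Set.univ B)
  rw [pi_inf, card_pi, card_pi] at h1
  have h3 : (∏ i, (A i).relIndex (B i)) * ∏ i, Nat.card (A i ⊓ B i : Subgroup (G i))
      = ∏ i, Nat.card (B i) := by
    rw [← Finset.prod_mul_distrib]
    exact Finset.prod_congr rfl fun i _ => relindex_mul_card_inf _ _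
  have hpos : 0 < ∏ i, Nat.card (A i ⊓ B i : Subgroup (G i)) :=
    Finset.prod_pos fun i _ => Nat.card_pos
  exact Nat.eq_of_mul_eq_mul_right hpos (h1.trans h3.symm)

end RelindexPi

section Vanishing

variable {ι : Type*} [Fintype ι] [DecidableEq ι] {G : ι → Type*} [∀ i, Group (G i)]
  [∀ i, Finite (G i)]

lemma isSplit_mcl (hmax : ∀ M : Subgroup (∀ i, G i), IsCoatom M → IsSplit M)
    (H : Subgroup (∀ i, G i)) : IsSplit (mcl H) :=
  isSplit_sInf fun M hM => hmax M hM.1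

lemma muSub_eq_zero (hmax : ∀ M : Subgroup (∀ i, G i), IsCoatom M → IsSplit M)
    {H : Subgroup (∀ i, G i)} (h : ¬ IsSplit H) : muSub H = 0 := by
  refine mob_eq_zero_of_closure mcl (fun _ _ hh => mcl_mono hh) le_mcl mcl_idem
    (fun _ hx => mcl_eq_top hx) H ?_
  intro heq
  exact h (heq ▸ isSplit_mcl hmax H)

lemma mob_class_eq_zero (hmax : ∀ M : Subgroup (∀ i, G i), IsCoatom M → IsSplit M)
    {x : ConjClassSub (∀ i, G i)} (h : ¬ IsSplit (rep x)) : mob x = 0 := by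
  refine mob_eq_zero_of_closure mclC mclC_mono le_mclC mclC_idem
    (fun _ hx => mclC_eq_top hx) x ?_
  intro heq
  apply h
  obtain ⟨g, hg⟩ := exists_conj_of_class_eq (heq.trans (conjClassOf_rep x).symm)
  rw [hg]
  exact isSplit_cj (isSplit_mcl hmax _)

lemma lamSub_eq_zero (hmax : ∀ M : Subgroup (∀ i, G i), IsCoatom M → IsSplit M)
    {H : Subgroup (∀ i, G i)} (h : ¬ IsSplit H) : lamSub H = 0 := by
  refine mob_class_eq_zero hmax ?_
  obtain ⟨g, hg⟩ := rep_spec H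
  rw [hg]
  intro hsp
  apply h
  have : cj g⁻¹ (cj g H) = H := by rw [cj_cj, inv_mul_cancel, cj_one]
  rw [← this]
  exact isSplit_cj hsp

lemma muSub_pi (hmax : ∀ M : Subgroup (∀ i, G i), IsCoatom M → IsSplit M)
    (K : ∀ i, Subgroup (G i)) :
    muSub (Subgroup.pi Set.univ K) = ∏ i, muSub (K i) := by
  refine mob_pi_map (fun q => Subgroup.pi Set.univ q) ?_ (Subgroup.pi_top _) ?_ K
  · intro q q'
    exact ⟨fun h i => pi_le_pi_iff.1 h i, fun h => pi_mono fun i => h i⟩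
  · intro p hp
    refine muSub_eq_zero hmax ?_
    rintro ⟨q, rfl⟩
    exact hp q rfl

/-- The embedding of tuples of conjugacy classes into conjugacy classes of the product. -/
noncomputable def eC (q : ∀ i, ConjClassSub (G i)) : ConjClassSub (∀ i, G i) :=
  conjClassOf _ (Subgroup.pi Set.univ fun i => rep (q i))

lemma eC_conjClassOf_pi (K : ∀ i, Subgroup (G i)) :
    eC (fun i => conjClassOf (G i) (K i)) = conjClassOf _ (Subgroup.pi Set.univ K) := by
  choose g hg using fun i => rep_spec (K i)
  unfold eC
  have h1 : (fun i => rep (conjClassOf (G i) (K i))) = fun i => cj (g i) (K i) :=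
    funext fun i => hg i
  rw [h1, ← cj_pi, conjClassOf_cj]

lemma mob_eC (hmax : ∀ M : Subgroup (∀ i, G i), IsCoatom M → IsSplit M)
    (q : ∀ i, ConjClassSub (G i)) : mob (eC q) = ∏ i, mob (q i) := by
  refine mob_pi_map eC ?_ ?_ ?_ q
  · intro a b
    constructor
    · intro h
      obtain ⟨g, hg⟩ := conjClassOf_le_iff.1 h
      rw [cj_pi] at hg
      intro i
      rw [← conjClassOf_rep (a i), ← conjClassOf_rep (b i)]
      exact conjClassOf_le_iff.2 ⟨g i, pi_le_pi_iff.1 hg i⟩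
    · intro h
      have h' : ∀ i, ∃ gi, rep (a i) ≤ cj gi (rep (b i)) := fun i =>
        conjClassOf_le_iff.1 (by rw [conjClassOf_rep, conjClassOf_rep]; exact h i)
      choose g hg using h'
      exact conjClassOf_le_iff.2 ⟨g, by rw [cj_pi]; exact pi_mono hg⟩
  · unfold eC
    have h1 : (fun i => rep (⊤ : ConjClassSub (G i))) = fun i => (⊤ : Subgroup (G i)) :=
      funext fun i => rep_top
    rw [show (⊤ : ∀ i, ConjClassSub (G i)) = fun i => (⊤ : ConjClassSub (G i)) from rfl,
      h1, Subgroup.pi_top]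
    rfl
  · intro p hp
    refine mob_class_eq_zero hmax ?_
    intro hsp
    obtain ⟨K, hK⟩ := hsp
    apply hp (fun i => conjClassOf (G i) (K i))
    rw [eC_conjClassOf_pi, ← hK, conjClassOf_rep]

lemma lamSub_pi (hmax : ∀ M : Subgroup (∀ i, G i), IsCoatom M → IsSplit M)
    (K : ∀ i, Subgroup (G i)) :
    lamSub (Subgroup.pi Set.univ K) = ∏ i, lamSub (K i) := by
  unfold lamSub
  rw [← eC_conjClassOf_pi]
  exact mob_eC hmax _

end Vanishing


instance {n R : Type*} [DecidableEq n] [Fintype n] [CommRing R] [Finite R] :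
    Finite (Matrix.SpecialLinearGroup n R) :=
  Finite.of_injective (fun A => (A : Matrix n n R)) Subtype.coe_injective

open scoped MatrixGroups

/-- If every maximal subgroup of `G = ∏ Gᵢ` splits as a direct product and each `Gᵢ`
satisfies the (μ,λ)-property, then so does `G`. -/
theorem muLambdaProperty_pi (n : ℕ) (hn : 2 ≤ n) (G : Fin n → Type*) [∀ i, Group (G i)] [∀ i, Finite (G i)]
    (hmax : ∀ M : Subgroup (∀ i, G i), IsCoatom M →
      ∃ M' : ∀ i, Subgroup (G i), M = Subgroup.pi Set.univ M')
    (hml : ∀ i, MuLambdaProperty (G i)) :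
    MuLambdaProperty (∀ i, G i) := by
  have hmax' : ∀ M : Subgroup (∀ i, G i), IsCoatom M → IsSplit M := fun M hM =>
    hmax M hM
  intro H
  by_cases hs : IsSplit H
  · obtain ⟨K, rfl⟩ := hs
    have hcomm : commutator (∀ i, G i) = Subgroup.pi Set.univ (fun i => commutator (G i)) := by
      rw [commutator_def, ← Subgroup.pi_top Set.univ,
        Subgroup.commutator_pi_pi_of_finite]
      simp only [commutator_def]
    have hrel : (commutator (∀ i, G i) ⊓ Subgroup.pi Set.univ K).relIndex
        (Subgroup.normalizer ((Subgroup.pi Set.univ K : Subgroup (∀ i, G i)) : Set (∀ i, G i)) ⊓ commutator (∀ i, G i))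
        = ∏ i, ((commutator (G i) ⊓ K i).relIndex (Subgroup.normalizer ((K i : Subgroup (G i)) : Set (G i)) ⊓ commutator (G i))) := by
      rw [hcomm, pi_inf, normalizer_pi, pi_inf, relindex_pi]
    rw [muSub_pi hmax' K, lamSub_pi hmax' K, hrel]
    push_cast
    rw [← Finset.prod_mul_distrib]
    exact Finset.prod_congr rfl fun i _ => hml i (K i)
  · rw [muSub_eq_zero hmax' hs, lamSub_eq_zero hmax' hs, mul_zero]
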